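/- For a tree T of order n ≥ 2, the following are equivalent: (i) T is well-covered; (ii) T is very well-covered; (iii) T has a perfect matching consisting of pendant edges; (iv) T is square-stable. -/

import Mathlib

open SimpleGraph

attribute [local instance] Classical.propDecidable

variable {V : Type*}

/-- A stable (independent) set: pairwise non-adjacent vertices. -/
def IsStable (G : SimpleGraph V) (S : Finset V) : Prop :=
  ∀ ⦃a⦄, a ∈ S → ∀ ⦃b⦄, b ∈ S → ¬ G.Adj a b

/-- The stability (independence) number α(G). -/
noncomputable def alpha [Fintype V] (G : SimpleGraph V) : ℕ :=
  (Finset.univ.powerset.filter (fun S => IsStable G S)).sup Finset.card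

/-- A maximum stable set, i.e. a member of Ω(G). -/
def IsMaxStable [Fintype V] (G : SimpleGraph V) (S : Finset V) : Prop :=
  IsStable G S ∧ S.card = alpha G

/-- The square G² of a graph: distinct vertices adjacent iff at distance ≤ 2. -/
def square (G : SimpleGraph V) : SimpleGraph V where
  Adj u v := u ≠ v ∧ (G.Adj u v ∨ ∃ w, G.Adj u w ∧ G.Adj w v)
  symm := by
    constructor
    rintro u v ⟨h, h2⟩
    refine ⟨h.symm, ?_⟩
    rcases h2 with h2 | ⟨w, hw1, hw2⟩
    · exact Or.inl h2.symm
    · exact Or.inr ⟨w, hw2.symm, hw1.symm⟩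
  loopless := by constructor; rintro u ⟨h, _⟩; exact h rfl

/-- G is α-square-stable if α(G) = α(G²). -/
def SquareStable [Fintype V] (G : SimpleGraph V) : Prop :=
  alpha G = alpha (square G)

/-- The maximum matching size μ(G). -/
noncomputable def mu [Fintype V] (G : SimpleGraph V) : ℕ :=
  sSup {n | ∃ M : G.Subgraph, M.IsMatching ∧ M.verts.ncard = 2 * n}

/-- f realizes a matching of A into S: it sends each a ∈ A to a distinct
neighbour in S (so the corresponding edges form a matching ⊆ (A,S) saturating A). -/
def MatchedInto (G : SimpleGraph V) (A S : Finset V) (f : V → V) : Prop :=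
  (∀ a ∈ A, f a ∈ S ∧ G.Adj a (f a)) ∧ ∀ a ∈ A, ∀ b ∈ A, f a = f b → a = b

/-- Well-covered: no isolated vertices, and every maximal stable set is maximum. -/
def WellCovered [Fintype V] (G : SimpleGraph V) : Prop :=
  (∀ v : V, ∃ w, G.Adj v w) ∧
    ∀ S : Finset V, IsStable G S → (∀ T : Finset V, IsStable G T → S ⊆ T → S = T) →
      S.card = alpha G

/-- Very well-covered: well-covered and |V(G)| = 2α(G). -/
def VeryWellCovered [Fintype V] (G : SimpleGraph V) : Prop :=
  WellCovered G ∧ Fintype.card V = 2 * alpha G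

/-- The set of pendant (degree-one) vertices of G. -/
noncomputable def pendants [Fintype V] (G : SimpleGraph V) : Finset V :=
  Finset.univ.filter (fun v => G.degree v = 1)

/-- G has a perfect matching consisting of pendant edges. -/
def HasPendantPerfectMatching [Fintype V] (G : SimpleGraph V) : Prop :=
  ∃ M : G.Subgraph, M.IsPerfectMatching ∧
    ∀ a b : V, M.Adj a b → G.degree a = 1 ∨ G.degree b = 1

/-- The star K_{1,n}: vertex 0 is the center, adjacent to n leaves. -/
def starGraph (n : ℕ) : SimpleGraph (Fin (n + 1)) where
  Adj u v := u ≠ v ∧ (u = 0 ∨ v = 0)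
  symm := by constructor; rintro u v ⟨h1, h2⟩; exact ⟨h1.symm, h2.symm⟩
  loopless := by constructor; rintro u ⟨h, _⟩; exact h rfl

set_option linter.unusedSectionVars false

namespace Aux

variable [Fintype V] {G : SimpleGraph V}

lemma stable_empty (G : SimpleGraph V) : IsStable G ∅ := by
  intro a ha; simp at ha

lemma stable_singleton (G : SimpleGraph V) (v : V) : IsStable G {v} := by
  intro a ha b hb
  simp only [Finset.mem_singleton] at ha hb
  subst ha; subst hb; exact G.loopless.irrefl _

lemma stable_subset {S T : Finset V} (hT : IsStable G T) (h : S ⊆ T) : IsStable G S :=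
  fun _ ha _ hb => hT (h ha) (h hb)

lemma stable_insert {S : Finset V} {v : V} (hS : IsStable G S)
    (h : ∀ u ∈ S, ¬ G.Adj v u) : IsStable G (insert v S) := by
  intro a ha b hb hadj
  rcases Finset.mem_insert.1 ha with ha' | ha' <;> rcases Finset.mem_insert.1 hb with hb' | hb'
  · exact G.loopless.irrefl _ (ha' ▸ hb' ▸ hadj)
  · exact h b hb' (ha' ▸ hadj)
  · exact h a ha' (hb' ▸ hadj).symm
  · exact hS ha' hb' hadj

lemma card_le_alpha {S : Finset V} (hS : IsStable G S) : S.card ≤ alpha G :=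
  Finset.le_sup (by simp [Finset.mem_filter, Finset.mem_powerset, hS])

lemma exists_alpha_set (G : SimpleGraph V) : ∃ S, IsStable G S ∧ S.card = alpha G := by
  obtain ⟨S, hS, h⟩ := Finset.exists_mem_eq_sup
    (Finset.univ.powerset.filter (fun S => IsStable G S))
    ⟨∅, by simp [stable_empty]⟩ Finset.card
  exact ⟨S, (Finset.mem_filter.1 hS).2, h.symm⟩

lemma one_le_alpha (G : SimpleGraph V) [Nonempty V] : 1 ≤ alpha G := by
  have := card_le_alpha (G := G) (stable_singleton G (Classical.arbitrary V))
  simpa using this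

/-- maximal stable set within the vertex set `W`, in domination form -/
def MaxIn (G : SimpleGraph V) (W S : Finset V) : Prop :=
  S ⊆ W ∧ IsStable G S ∧ ∀ v ∈ W, v ∉ S → ∃ u ∈ S, G.Adj v u

lemma extend_maxIn {W S : Finset V} (hSW : S ⊆ W) (hS : IsStable G S) :
    ∃ D, S ⊆ D ∧ MaxIn G W D := by
  classical
  set F := W.powerset.filter (fun D => S ⊆ D ∧ IsStable G D) with hF
  have hne : F.Nonempty := ⟨S, by simp [hF, Finset.mem_powerset, hSW, hS]⟩
  obtain ⟨D, hD, hmax⟩ := Finset.exists_max_image F Finset.card hne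
  simp only [hF, Finset.mem_filter, Finset.mem_powerset] at hD
  refine ⟨D, hD.2.1, hD.1, hD.2.2, ?_⟩
  intro v hvW hvD
  by_contra hno
  push_neg at hno
  have hins : insert v D ∈ F := by
    simp only [hF, Finset.mem_filter, Finset.mem_powerset]
    refine ⟨Finset.insert_subset hvW hD.1, hD.2.1.trans (Finset.subset_insert _ _),
      stable_insert hD.2.2 hno⟩
  have := hmax _ hins
  rw [Finset.card_insert_of_notMem hvD] at this
  omega

lemma maxIn_univ_subset_maximal {S : Finset V} (h : MaxIn G Finset.univ S) :
    ∀ T, IsStable G T → S ⊆ T → S = T := by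
  intro T hT hST
  by_contra hne
  obtain ⟨v, hvT, hvS⟩ := Finset.exists_of_ssubset (hST.ssubset_of_ne hne)
  obtain ⟨u, huS, hadj⟩ := h.2.2 v (Finset.mem_univ v) hvS
  exact hT hvT (hST huS) hadj

lemma subset_maximal_maxIn_univ {S : Finset V} (hS : IsStable G S)
    (h : ∀ T, IsStable G T → S ⊆ T → S = T) : MaxIn G Finset.univ S := by
  refine ⟨Finset.subset_univ S, hS, ?_⟩
  intro v _ hvS
  by_contra hno
  push_neg at hno
  have hst : IsStable G (insert v S) := stable_insert hS hno
  have := h _ hst (Finset.subset_insert _ _)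
  exact hvS (this ▸ Finset.mem_insert_self v S)

lemma wc_card_of_maxIn (hwc : (∀ S : Finset V, IsStable G S →
      (∀ T : Finset V, IsStable G T → S ⊆ T → S = T) → S.card = alpha G))
    {S : Finset V} (h : MaxIn G Finset.univ S) : S.card = alpha G :=
  hwc S h.2.1 (maxIn_univ_subset_maximal h)

lemma alpha_set_maxIn (G : SimpleGraph V) :
    ∃ S, MaxIn G Finset.univ S ∧ S.card = alpha G := by
  obtain ⟨S, hS, hcard⟩ := exists_alpha_set G
  refine ⟨S, ⟨Finset.subset_univ S, hS, ?_⟩, hcard⟩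
  intro v _ hvS
  by_contra hno
  push_neg at hno
  have hst : IsStable G (insert v S) := stable_insert hS hno
  have := card_le_alpha hst
  rw [Finset.card_insert_of_notMem hvS] at this
  omega

/-! ### degree-one vertices -/

lemma degree_one_nbr {v : V} (h : G.degree v = 1) : ∃ w, G.Adj v w ∧ ∀ u, G.Adj v u → u = w := by
  rw [← G.card_neighborFinset_eq_degree] at h
  obtain ⟨w, hw⟩ := Finset.card_eq_one.1 h
  refine ⟨w, ?_, ?_⟩
  · have : w ∈ G.neighborFinset v := hw ▸ Finset.mem_singleton_self w
    exact (G.mem_neighborFinset v w).1 this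
  · intro u hu
    have : u ∈ G.neighborFinset v := (G.mem_neighborFinset v u).2 hu
    rw [hw, Finset.mem_singleton] at this
    exact this

lemma degree_one_of_unique_nbr {v w : V} (hadj : G.Adj v w)
    (h : ∀ u, G.Adj v u → u = w) : G.degree v = 1 := by
  rw [← G.card_neighborFinset_eq_degree]
  rw [Finset.card_eq_one]
  refine ⟨w, Finset.ext fun u => ?_⟩
  simp only [mem_neighborFinset, Finset.mem_singleton]
  exact ⟨h u, fun h' => h' ▸ hadj⟩

/-! ### walks -/

lemma internal_two_nbrs {u w : V} (p : G.Walk u w) :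
    p.IsPath → ∀ x ∈ p.support, x ≠ u → x ≠ w →
      ∃ b c, b ≠ c ∧ G.Adj x b ∧ G.Adj x c ∧ b ∈ p.support ∧ c ∈ p.support := by
  induction p with
  | nil =>
    intro _ x hx hxu _
    simp only [Walk.support_nil, List.mem_singleton] at hx
    exact absurd hx hxu
  | @cons a b c h q ih =>
    intro hp x hx hxu hxw
    rw [Walk.support_cons, List.mem_cons] at hx
    rcases hx with rfl | hx
    · exact absurd rfl hxu
    rw [Walk.cons_isPath_iff] at hp
    by_cases hxb : x = b
    · subst hxb
      cases q with
      | nil => exact absurd rfl hxw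
      | @cons b b2 c h2 q2 =>
        refine ⟨a, b2, ?_, h.symm, h2, ?_, ?_⟩
        · intro heq
          apply hp.2
          rw [heq, Walk.support_cons]
          exact List.mem_cons_of_mem _ (Walk.start_mem_support q2)
        · rw [Walk.support_cons]
          exact List.mem_cons_self
        · rw [Walk.support_cons]
          apply List.mem_cons_of_mem
          rw [Walk.support_cons]
          exact List.mem_cons_of_mem _ (Walk.start_mem_support q2)
    · obtain ⟨b', c', hne, hb', hc', hbs, hcs⟩ := ih hp.1 x hx hxb hxw
      exact ⟨b', c', hne, hb', hc', by rw [Walk.support_cons]; exact List.mem_cons_of_mem _ hbs,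
        by rw [Walk.support_cons]; exact List.mem_cons_of_mem _ hcs⟩

end Aux

namespace Chunk2
variable [Fintype V] {G : SimpleGraph V}
open Aux

lemma exists_adj (hc : G.Connected) (h2 : 2 ≤ Fintype.card V) (v : V) : ∃ w, G.Adj v w := by
  obtain ⟨u, hu⟩ := Fintype.exists_ne_of_one_lt_card (by omega) v
  obtain ⟨p⟩ := hc.preconnected v u
  cases p with
  | nil => exact absurd rfl hu
  | cons h q => exact ⟨_, h⟩

lemma no_K2 (hc : G.Connected) (h3 : 3 ≤ Fintype.card V) {x y : V}
    (hadj : G.Adj x y) (hx : G.degree x = 1) (hy : G.degree y = 1) : False := by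
  obtain ⟨wx, hwx, hux⟩ := degree_one_nbr hx
  obtain ⟨wy, hwy, huy⟩ := degree_one_nbr hy
  have hv : ∃ v : V, v ≠ x ∧ v ≠ y := by
    by_contra hno
    push_neg at hno
    have hsub : (Finset.univ : Finset V) ⊆ {x, y} := by
      intro v _
      rcases eq_or_ne v x with rfl | hvx
      · exact Finset.mem_insert_self _ _
      · simp [hno v hvx]
    have := Finset.card_le_card hsub
    have h2 : ({x, y} : Finset V).card ≤ 2 := Finset.card_insert_le _ _ |>.trans (by simp)
    rw [Finset.card_univ] at this
    omega
  obtain ⟨v, hvx, hvy⟩ := hv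
  obtain ⟨p⟩ := hc.preconnected x v
  obtain ⟨q, hq⟩ : ∃ q : G.Walk x v, q.IsPath := ⟨p.toPath.1, p.toPath.2⟩
  cases q with
  | nil => exact hvx rfl
  | @cons _ z _ h1 q1 =>
    have hz : z = y := by rw [hux z h1, ← hux y hadj]
    subst hz
    rw [Walk.cons_isPath_iff] at hq
    cases q1 with
    | nil => exact hvy rfl
    | @cons _ z2 _ h2 q2 =>
      have hz2 : z2 = x := by rw [huy z2 h2, ← huy x hadj.symm]
      subst hz2
      apply hq.2
      rw [Walk.support_cons]
      exact List.mem_cons_of_mem _ (Walk.start_mem_support q2)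

end Chunk2

namespace Chunk3
variable [Fintype V] {G : SimpleGraph V}
open Aux Chunk2

lemma exists_path_length_dist (hc : G.Connected) (u v : V) :
    ∃ p : G.Walk u v, p.IsPath ∧ p.length = G.dist u v := by
  obtain ⟨p, hp⟩ := hc.exists_walk_length_eq_dist u v
  refine ⟨p.bypass, Walk.bypass_isPath p, le_antisymm ?_ ?_⟩
  · exact hp ▸ Walk.length_bypass_le p
  · exact SimpleGraph.dist_le _

lemma isPath_concat {u v w : V} {p : G.Walk u v} (hp : p.IsPath) (h : G.Adj v w)
    (hw : w ∉ p.support) : (p.concat h).IsPath := by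
  rw [Walk.isPath_def, Walk.support_concat]
  rw [List.nodup_append']
  exact ⟨hp.support_nodup, List.nodup_singleton w, by
    intro a ha hb
    simp only [List.mem_singleton] at hb
    subst hb
    exact hw ha⟩

lemma dist_le_adj (hc : G.Connected) (r : V) {u v : V} (hadj : G.Adj u v) :
    G.dist r v ≤ G.dist r u + 1 := by
  obtain ⟨p, _, hl⟩ := exists_path_length_dist hc r u
  have := SimpleGraph.dist_le (p.concat hadj)
  rw [Walk.length_concat, hl] at this
  exact this

lemma tree_adj_dist_ne (ht : G.IsTree) (r : V) {u v : V} (hadj : G.Adj u v) :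
    G.dist r u ≠ G.dist r v := by
  intro heq
  obtain ⟨p, hp, hpl⟩ := exists_path_length_dist ht.isConnected r u
  obtain ⟨q, hq, hql⟩ := exists_path_length_dist ht.isConnected r v
  by_cases hvp : v ∈ p.support
  · have h1 : (p.takeUntil v hvp).length ≤ p.length := Walk.length_takeUntil_le p hvp
    have hne : v ≠ u := hadj.ne'
    have h2 : (p.takeUntil v hvp).length ≠ p.length := by
      intro hlen
      have htot := congrArg Walk.length (Walk.take_spec p hvp)
      rw [Walk.length_append] at htot
      exact hne (Walk.eq_of_length_eq_zero (p := p.dropUntil v hvp) (by omega))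
    have hlt : G.dist r v < G.dist r u := by
      calc G.dist r v ≤ (p.takeUntil v hvp).length := SimpleGraph.dist_le _
      _ < p.length := lt_of_le_of_ne h1 h2
      _ = G.dist r u := hpl
    omega
  · have hcp : (p.concat hadj).IsPath := isPath_concat hp hadj hvp
    have huniq := ht.existsUnique_path r v
    have heq2 : p.concat hadj = q := huniq.unique hcp hq
    have := congrArg Walk.length heq2
    rw [Walk.length_concat, hpl, hql] at this
    omega

lemma exists_closer_nbr (hc : G.Connected) {r v : V} (hne : v ≠ r) :
    ∃ z, G.Adj v z ∧ G.dist r z + 1 = G.dist r v := by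
  obtain ⟨p, hp, hl⟩ := exists_path_length_dist hc r v
  cases hrev : p.reverse with
  | nil =>
    have := congrArg Walk.length hrev
    rw [Walk.length_reverse] at this
    exact absurd (Walk.eq_of_length_eq_zero (by simpa using this)).symm hne
  | @cons _ z _ h q =>
    refine ⟨z, h, ?_⟩
    have h3 : q.length + 1 = p.length := by
      have := congrArg Walk.length hrev
      rw [Walk.length_reverse] at this
      simpa using this.symm
    have h1 : G.dist r z ≤ q.length := by
      have := SimpleGraph.dist_le q.reverse
      rwa [Walk.length_reverse] at this
    have h2 : G.dist r v ≤ G.dist r z + 1 := dist_le_adj hc r h.symm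
    omega

lemma closer_nbr_unique (ht : G.IsTree) {r v z1 z2 : V} (h1 : G.Adj v z1) (h2 : G.Adj v z2)
    (hd1 : G.dist r z1 + 1 = G.dist r v) (hd2 : G.dist r z2 + 1 = G.dist r v) : z1 = z2 := by
  obtain ⟨p1, hp1, hl1⟩ := exists_path_length_dist ht.isConnected r z1
  obtain ⟨p2, hp2, hl2⟩ := exists_path_length_dist ht.isConnected r z2
  have hv1 : v ∉ p1.support := by
    intro hv
    have := SimpleGraph.dist_le (p1.takeUntil v hv)
    have hle := Walk.length_takeUntil_le p1 hv
    omega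
  have hv2 : v ∉ p2.support := by
    intro hv
    have := SimpleGraph.dist_le (p2.takeUntil v hv)
    have hle := Walk.length_takeUntil_le p2 hv
    omega
  have hc1 : (p1.concat h1.symm).IsPath := isPath_concat hp1 h1.symm hv1
  have hc2 : (p2.concat h2.symm).IsPath := isPath_concat hp2 h2.symm hv2
  have heq : p1.concat h1.symm = p2.concat h2.symm :=
    ((ht.existsUnique_path r v).unique hc1 hc2)
  have hrev := congrArg Walk.reverse heq
  rw [Walk.reverse_concat, Walk.reverse_concat] at hrev
  injection hrev

end Chunk3

namespace Chunk4
variable [Fintype V] {G : SimpleGraph V}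
open Aux Chunk2 Chunk3

lemma exists_third (h3 : 3 ≤ Fintype.card V) (x y : V) : ∃ v : V, v ≠ x ∧ v ≠ y := by
  by_contra hno
  push_neg at hno
  have hsub : (Finset.univ : Finset V) ⊆ {x, y} := by
    intro v _
    rcases eq_or_ne v x with rfl | hvx
    · exact Finset.mem_insert_self _ _
    · simp [hno v hvx]
  have := Finset.card_le_card hsub
  have h2 : ({x, y} : Finset V).card ≤ 2 := Finset.card_insert_le _ _ |>.trans (by simp)
  rw [Finset.card_univ] at this
  omega

lemma leaf_of_max_dist (ht : G.IsTree) {r m : V}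
    (hm : ∀ w, G.dist r w ≤ G.dist r m) (hmr : m ≠ r) : G.degree m = 1 := by
  obtain ⟨z, hz, hzd⟩ := exists_closer_nbr ht.isConnected hmr
  apply degree_one_of_unique_nbr hz
  intro u hu
  have hne := tree_adj_dist_ne ht r hu
  have hle1 := dist_le_adj ht.isConnected r hu
  have hle2 := dist_le_adj ht.isConnected r hu.symm
  have hum := hm u
  have : G.dist r u + 1 = G.dist r m := by omega
  exact closer_nbr_unique ht hu hz this hzd

lemma exists_max_dist (r : V) : ∃ m : V, ∀ w, G.dist r w ≤ G.dist r m := by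
  obtain ⟨m, _, hm⟩ := Finset.exists_max_image Finset.univ (G.dist r) ⟨r, Finset.mem_univ r⟩
  exact ⟨m, fun w => hm w (Finset.mem_univ w)⟩

lemma exists_leaf (ht : G.IsTree) (h2 : 2 ≤ Fintype.card V) (r : V) :
    ∃ m, m ≠ r ∧ G.degree m = 1 ∧ (∀ w, G.dist r w ≤ G.dist r m) := by
  obtain ⟨m, hm⟩ := exists_max_dist (G := G) r
  have hmr : m ≠ r := by
    rintro rfl
    obtain ⟨u, hu⟩ := Fintype.exists_ne_of_one_lt_card (by omega) m
    have h1 : 0 < G.dist m u := ht.isConnected.pos_dist_of_ne (Ne.symm hu)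
    have := hm u
    rw [SimpleGraph.dist_self] at this
    omega
  exact ⟨m, hmr, leaf_of_max_dist ht hm hmr, hm⟩

lemma exists_good_pendant (ht : G.IsTree) (h3 : 3 ≤ Fintype.card V)
    (claim1 : ∀ w u v', G.Adj w u → G.Adj w v' → G.degree u = 1 → G.degree v' = 1 → u = v') :
    ∃ l a x : V, G.degree l = 1 ∧ G.Adj a l ∧ G.Adj a x ∧ x ≠ l ∧
      (∀ u, G.Adj a u → u = l ∨ u = x) := by
  obtain ⟨v0⟩ := ht.isConnected.nonempty
  obtain ⟨r, _, hrdeg, _⟩ := exists_leaf ht (by omega) v0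
  obtain ⟨m, hmr, hmdeg, hm⟩ := exists_leaf ht (by omega) r
  obtain ⟨a, ham, hadist⟩ := exists_closer_nbr ht.isConnected hmr
  -- a ≠ r
  have har : a ≠ r := by
    intro heq
    have hdm : G.dist r m = 1 := by
      rw [heq, SimpleGraph.dist_self] at hadist; omega
    obtain ⟨u, hur, hum⟩ := exists_third h3 r m
    have hd1 : G.dist r u ≤ 1 := hdm ▸ hm u
    have hd0 : 0 < G.dist r u := ht.isConnected.pos_dist_of_ne (Ne.symm hur)
    obtain ⟨z, hz, hzd⟩ := exists_closer_nbr ht.isConnected hur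
    have hz0 : G.dist r z = 0 := by omega
    have hzr : z = r := (ht.isConnected.dist_eq_zero_iff.1 hz0).symm
    obtain ⟨wr, hwr, huwr⟩ := degree_one_nbr hrdeg
    have h1 : u = wr := huwr u (by rw [← hzr]; exact hz.symm)
    have h2 : m = wr := huwr m (by rw [← heq]; exact ham.symm)
    exact hum (h1.trans h2.symm)
  obtain ⟨x, hax, hxdist⟩ := exists_closer_nbr ht.isConnected har
  refine ⟨m, a, x, hmdeg, ham.symm, hax, ?_, ?_⟩
  · intro hxm
    rw [hxm] at hxdist
    omega
  · intro u hu
    have hne := tree_adj_dist_ne ht r hu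
    have hle1 := dist_le_adj ht.isConnected r hu
    have hle2 := dist_le_adj ht.isConnected r hu.symm
    rcases lt_or_gt_of_ne hne with hlt | hgt
    · -- u farther : dist r u = dist r a + 1 = dist r m → u max-dist → leaf → u = m
      have hud : G.dist r u = G.dist r m := by omega
      have humax : ∀ w, G.dist r w ≤ G.dist r u := fun w => hud ▸ hm w
      have hur : u ≠ r := by
        intro h
        have h1 : 0 < G.dist r m := ht.isConnected.pos_dist_of_ne (Ne.symm hmr)
        rw [h, SimpleGraph.dist_self] at hud
        omega
      have hudeg := leaf_of_max_dist ht humax hur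
      exact Or.inl (claim1 a u m hu ham.symm hudeg hmdeg)
    · -- u closer
      have : G.dist r u + 1 = G.dist r a := by omega
      exact Or.inr (closer_nbr_unique ht hu hax this hxdist)

lemma card_le_two_alpha (ht : G.IsTree) : Fintype.card V ≤ 2 * alpha G := by
  classical
  obtain ⟨r⟩ := ht.isConnected.nonempty
  set E := Finset.univ.filter (fun v => Even (G.dist r v)) with hEdef
  set O := Finset.univ.filter (fun v => ¬ Even (G.dist r v)) with hOdef
  have key : ∀ u v : V, G.Adj u v → (Even (G.dist r u) ↔ ¬ Even (G.dist r v)) := by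
    intro u v hadj
    have h1 := tree_adj_dist_ne ht r hadj
    have h2 := dist_le_adj ht.isConnected r hadj
    have h3 := dist_le_adj ht.isConnected r hadj.symm
    have : G.dist r u + 1 = G.dist r v ∨ G.dist r v + 1 = G.dist r u := by omega
    rcases this with h | h
    · rw [← h]; simp [Nat.even_add_one, not_not]
    · rw [← h]; simp [Nat.even_add_one, not_not]
  have hE : IsStable G E := by
    intro u hu v hv hadj
    rw [hEdef, Finset.mem_filter] at hu hv
    exact (key u v hadj).1 hu.2 hv.2
  have hO : IsStable G O := by
    intro u hu v hv hadj
    rw [hOdef, Finset.mem_filter] at hu hv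
    exact hu.2 ((key u v hadj).2 hv.2)
  have hsum : E.card + O.card = Fintype.card V := by
    rw [hEdef, hOdef, Finset.card_filter_add_card_filter_not, Finset.card_univ]
  have c1 := card_le_alpha hE
  have c2 := card_le_alpha hO
  omega

end Chunk4

namespace Chunk5
variable [Fintype V] {G : SimpleGraph V}
open Aux Chunk2 Chunk3 Chunk4

lemma claim1 (hwc : WellCovered G) :
    ∀ w u v', G.Adj w u → G.Adj w v' → G.degree u = 1 → G.degree v' = 1 → u = v' := by
  intro w u v hwu hwv hdu hdv
  by_contra hne
  obtain ⟨S, hSsub, hmax⟩ := extend_maxIn (W := Finset.univ) (S := {w})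
    (Finset.subset_univ _) (stable_singleton G w)
  have hwS : w ∈ S := hSsub (Finset.mem_singleton_self w)
  have hcard := wc_card_of_maxIn hwc.2 hmax
  have huS : u ∉ S := fun h => hmax.2.1 h hwS hwu.symm
  have hvS : v ∉ S := fun h => hmax.2.1 h hwS hwv.symm
  obtain ⟨wu, hwu1, huu⟩ := degree_one_nbr hdu
  obtain ⟨wv, hwv1, huv⟩ := degree_one_nbr hdv
  have hwuw : w = wu := huu w hwu.symm
  have hwvw : w = wv := huv w hwv.symm
  set S' := insert u (insert v (S.erase w)) with hS'
  have hstab : IsStable G S' := by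
    apply stable_insert
    · apply stable_insert
      · exact stable_subset hmax.2.1 (Finset.erase_subset _ _)
      · intro t ht hadj
        have : t = wv := huv t hadj
        rw [← hwvw] at this
        exact Finset.ne_of_mem_erase ht this
    · intro t ht hadj
      rcases Finset.mem_insert.1 ht with rfl | ht'
      · have : t = wu := huu t hadj
        rw [← hwuw] at this
        exact hwv.ne' (this ▸ rfl)
      · have : t = wu := huu t hadj
        rw [← hwuw] at this
        exact Finset.ne_of_mem_erase ht' this
  have hvne : v ∉ S.erase w := fun h => hvS (Finset.mem_of_mem_erase h)
  have hune : u ∉ insert v (S.erase w) := by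
    rw [Finset.mem_insert]
    rintro (rfl | h)
    · exact hne rfl
    · exact huS (Finset.mem_of_mem_erase h)
  have hcard' : S'.card = S.card + 1 := by
    rw [hS', Finset.card_insert_of_notMem hune, Finset.card_insert_of_notMem hvne,
      Finset.card_erase_of_mem hwS]
    have : 1 ≤ S.card := Finset.card_pos.2 ⟨w, hwS⟩
    omega
  have := card_le_alpha hstab
  omega

lemma ppm_props (hpm : HasPendantPerfectMatching G) :
    ∃ f : V → V, (∀ v, G.Adj v (f v)) ∧ (∀ v, f (f v) = v) ∧
      (∀ v, G.degree v = 1 ∨ G.degree (f v) = 1) := by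
  obtain ⟨M, hM, hpend⟩ := hpm
  have hall := (Subgraph.isPerfectMatching_iff).1 hM
  choose f hf hfu using hall
  refine ⟨f, fun v => M.adj_sub (hf v), fun v => (hfu (f v) v (hf v).symm).symm,
    fun v => hpend v (f v) (hf v)⟩

lemma ppm_maximal_card (hpm : HasPendantPerfectMatching G) {S : Finset V}
    (hmax : MaxIn G Finset.univ S) : 2 * S.card = Fintype.card V := by
  obtain ⟨f, hadj, hinv, hpend⟩ := ppm_props hpm
  have hfinj : Function.Injective f := Function.LeftInverse.injective hinv
  have key : ∀ v, v ∉ S → f v ∈ S := by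
    intro v hvS
    by_contra hfvS
    rcases hpend v with hdeg | hdeg
    · obtain ⟨w, hw, hu⟩ := degree_one_nbr hdeg
      obtain ⟨t, htS, hadjt⟩ := hmax.2.2 v (Finset.mem_univ v) hvS
      have h1 : t = w := hu t hadjt
      have h2 : f v = w := hu (f v) (hadj v)
      exact hfvS (h2 ▸ h1 ▸ htS)
    · obtain ⟨w, hw, hu⟩ := degree_one_nbr hdeg
      obtain ⟨t, htS, hadjt⟩ := hmax.2.2 (f v) (Finset.mem_univ _) hfvS
      have h1 : t = w := hu t hadjt
      have h2 : v = w := hu v (hadj v).symm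
      exact hvS (h2 ▸ h1 ▸ htS)
  have key2 : ∀ v ∈ S, f v ∈ Finset.univ \ S := by
    intro v hv
    rw [Finset.mem_sdiff]
    exact ⟨Finset.mem_univ _, fun h => hmax.2.1 hv h (hadj v)⟩
  have hcard : S.card = (Finset.univ \ S).card := by
    apply Finset.card_bij' (fun a _ => f a) (fun a _ => f a) key2
    · intro a ha
      exact key a (Finset.mem_sdiff.1 ha).2
    · intro a _; exact hinv a
    · intro a _; exact hinv a
  rw [Finset.card_sdiff_of_subset (Finset.subset_univ S), Finset.card_univ] at hcard
  have : S.card ≤ Fintype.card V := (Finset.card_le_card (Finset.subset_univ S)).trans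
    (le_of_eq Finset.card_univ)
  omega

lemma ppm_two_alpha (hpm : HasPendantPerfectMatching G) : 2 * alpha G = Fintype.card V := by
  obtain ⟨S, hmax, hcard⟩ := alpha_set_maxIn G
  rw [← hcard]
  exact ppm_maximal_card hpm hmax

lemma ppm_wc (hpm : HasPendantPerfectMatching G) : WellCovered G := by
  obtain ⟨f, hadj, _, _⟩ := ppm_props hpm
  refine ⟨fun v => ⟨f v, hadj v⟩, ?_⟩
  intro S hS hmaxsub
  have hmax := subset_maximal_maxIn_univ hS hmaxsub
  have h1 := ppm_maximal_card hpm hmax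
  have h2 := ppm_two_alpha hpm
  omega

lemma ppm_vwc (hpm : HasPendantPerfectMatching G) : VeryWellCovered G :=
  ⟨ppm_wc hpm, by have := ppm_two_alpha hpm; omega⟩

end Chunk5

namespace Chunk6
variable [Fintype V] {G : SimpleGraph V}
open Aux Chunk2 Chunk3 Chunk4 Chunk5

lemma stable_of_square_stable {S : Finset V} (hS : IsStable (square G) S) : IsStable G S := by
  intro a ha b hb hadj
  exact hS ha hb ⟨hadj.ne, Or.inl hadj⟩

lemma alpha_square_le (G : SimpleGraph V) : alpha (square G) ≤ alpha G := by
  obtain ⟨S, hS, hcard⟩ := exists_alpha_set (square G)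
  rw [← hcard]
  exact card_le_alpha (stable_of_square_stable hS)

lemma card_two_adj (hc : G.Connected) (hcard : Fintype.card V = 2) {u v : V}
    (huv : u ≠ v) : G.Adj u v := by
  obtain ⟨w, hw⟩ := exists_adj hc (le_of_eq hcard.symm) u
  have hwv : w = v := by
    by_contra hne
    have h3 : ({u, v, w} : Finset V).card = 3 :=
      Finset.card_eq_three.2 ⟨u, v, w, huv, hw.ne, Ne.symm hne, rfl⟩
    have hle := Finset.card_le_card (Finset.subset_univ ({u, v, w} : Finset V))
    rw [Finset.card_univ, hcard, h3] at hle
    omega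
  exact hwv ▸ hw

lemma alpha_le_one_of_allAdj {H : SimpleGraph V} (h : ∀ u v : V, u ≠ v → H.Adj u v) :
    alpha H ≤ 1 := by
  obtain ⟨S, hS, hcard⟩ := exists_alpha_set H
  rw [← hcard]
  by_contra hgt
  push_neg at hgt
  obtain ⟨a, ha, b, hb, hne⟩ := Finset.one_lt_card.1 hgt
  exact hS ha hb (h a b hne)

lemma ppm_sqs (hc : G.Connected) (h2 : 2 ≤ Fintype.card V)
    (hpm : HasPendantPerfectMatching G) : SquareStable G := by
  have hnonempty : Nonempty V := Fintype.card_pos_iff.1 (by omega)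
  rcases eq_or_lt_of_le h2 with hcard | h3
  · have hcard2 : Fintype.card V = 2 := hcard.symm
    have hg1 : alpha G = 1 := le_antisymm
      (alpha_le_one_of_allAdj fun u v huv => card_two_adj hc hcard2 huv) (one_le_alpha G)
    have hs1 : alpha (square G) = 1 := le_antisymm
      (alpha_le_one_of_allAdj fun u v huv => ⟨huv, Or.inl (card_two_adj hc hcard2 huv)⟩)
      (one_le_alpha _)
    unfold SquareStable
    omega
  · have h3' : 3 ≤ Fintype.card V := h3
    obtain ⟨f, hadj, hinv, hpend⟩ := ppm_props hpm
    have hfinj : Function.Injective f := Function.LeftInverse.injective hinv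
    have hPstable : IsStable (square G) (pendants G) := by
      intro u hu v hv hsq
      rw [pendants, Finset.mem_filter] at hu hv
      obtain ⟨hne, hor⟩ := hsq
      rcases hor with hadj' | ⟨w, hw1, hw2⟩
      · exact no_K2 hc h3' hadj' hu.2 hv.2
      · obtain ⟨wu, _, huu⟩ := degree_one_nbr hu.2
        obtain ⟨wv, _, huv⟩ := degree_one_nbr hv.2
        have h1 : f u = w := by rw [huu (f u) (hadj u), ← huu w hw1]
        have h2 : f v = w := by rw [huv (f v) (hadj v), ← huv w hw2.symm]
        exact hne (hfinj (h1.trans h2.symm))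
    have hmap : ∀ v ∈ Finset.univ \ pendants G, f v ∈ pendants G := by
      intro v hv
      rw [Finset.mem_sdiff, pendants, Finset.mem_filter] at hv
      rcases hpend v with h | h
      · exact absurd ⟨Finset.mem_univ v, h⟩ hv.2
      · rw [pendants, Finset.mem_filter]
        exact ⟨Finset.mem_univ _, h⟩
    have hinj2 : Set.InjOn f ↑(Finset.univ \ pendants G) := fun a _ b _ h => hfinj h
    have hcardle := Finset.card_le_card_of_injOn f hmap hinj2
    have hsplit : (Finset.univ \ pendants G).card = Fintype.card V - (pendants G).card := by
      rw [Finset.card_sdiff_of_subset (Finset.subset_univ _), Finset.card_univ]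
    have hle : (pendants G).card ≤ Fintype.card V := by
      rw [← Finset.card_univ]
      exact Finset.card_le_card (Finset.subset_univ _)
    have h2a := ppm_two_alpha hpm
    have hsql := alpha_square_le G
    have hge := card_le_alpha hPstable
    unfold SquareStable
    omega

end Chunk6

namespace Chunk7
variable [Fintype V] {G : SimpleGraph V}
open Aux Chunk2 Chunk3 Chunk4 Chunk5 Chunk6

lemma sqs_ppm (ht : G.IsTree) (h2 : 2 ≤ Fintype.card V) (hsq : SquareStable G) :
    HasPendantPerfectMatching G := by
  classical
  obtain ⟨S, hS, hScard⟩ := exists_alpha_set (square G)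
  have hSG : IsStable G S := stable_of_square_stable hS
  set N : V → Finset V := fun v => insert v (G.neighborFinset v) with hN
  have hmemN : ∀ u a, a ∈ N u ↔ (a = u ∨ G.Adj u a) := by
    intro u a
    simp [hN, Finset.mem_insert, mem_neighborFinset]
  have hdisj : ∀ x ∈ S, ∀ y ∈ S, x ≠ y → Disjoint (N x) (N y) := by
    intro x hx y hy hne
    rw [Finset.disjoint_left]
    intro a hax hay
    rw [hmemN] at hax hay
    rcases hax with rfl | hax
    · rcases hay with rfl | hay
      · exact hne rfl
      · exact hS hx hy ⟨hne, Or.inl hay.symm⟩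
    · rcases hay with rfl | hay
      · exact hS hx hy ⟨hne, Or.inl hax⟩
      · exact hS hx hy ⟨hne, Or.inr ⟨a, hax, hay.symm⟩⟩
  have hcardN : ∀ v, (N v).card = G.degree v + 1 := by
    intro v
    rw [hN]
    simp only []
    rw [Finset.card_insert_of_notMem (by simp), G.card_neighborFinset_eq_degree]
  have hdeg1 : ∀ v : V, 1 ≤ G.degree v := by
    intro v
    obtain ⟨w, hw⟩ := exists_adj ht.isConnected h2 v
    have hmem : w ∈ G.neighborFinset v := (mem_neighborFinset _ _ _).2 hw
    have := Finset.card_pos.2 ⟨w, hmem⟩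
    rwa [G.card_neighborFinset_eq_degree] at this
  have hsum : (S.biUnion N).card = ∑ v ∈ S, (N v).card := Finset.card_biUnion hdisj
  have hle : (S.biUnion N).card ≤ Fintype.card V := by
    rw [← Finset.card_univ]
    exact Finset.card_le_card (Finset.subset_univ _)
  have hsum_ge : 2 * S.card ≤ ∑ v ∈ S, (N v).card := by
    have : ∀ v ∈ S, 2 ≤ (N v).card := fun v _ => by
      rw [hcardN]; have := hdeg1 v; omega
    calc 2 * S.card = ∑ _v ∈ S, 2 := by rw [Finset.sum_const, smul_eq_mul, mul_comm]
    _ ≤ ∑ v ∈ S, (N v).card := Finset.sum_le_sum this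
  have hna := card_le_two_alpha ht
  have halphaS : S.card = alpha G := by rw [hScard, ← hsq]
  have heq1 : ∑ v ∈ S, (N v).card = 2 * S.card := by omega
  have hdegS : ∀ v ∈ S, G.degree v = 1 := by
    intro v hv
    by_contra hne1
    have hterm : ∀ u ∈ S, 2 ≤ (N u).card := fun u _ => by
      rw [hcardN]; have := hdeg1 u; omega
    have hstrict : 2 * S.card < ∑ u ∈ S, (N u).card := by
      have hlt : (2 : ℕ) < (N v).card := by
        rw [hcardN]; have := hdeg1 v; omega
      calc 2 * S.card = ∑ _u ∈ S, 2 := by rw [Finset.sum_const, smul_eq_mul, mul_comm]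
      _ < ∑ u ∈ S, (N u).card := Finset.sum_lt_sum (fun u hu => hterm u hu) ⟨v, hv, hlt⟩
    omega
  have hcover : S.biUnion N = Finset.univ := by
    apply Finset.eq_univ_of_card
    have := Finset.card_univ (α := V)
    omega
  -- build the matching
  refine ⟨⟨Set.univ, fun a b => G.Adj a b ∧ (a ∈ S ∨ b ∈ S), fun h => h.1,
    fun {v w} _ => Set.mem_univ v, ⟨fun a b h => ⟨h.1.symm, h.2.symm⟩⟩⟩, ?_, ?_⟩
  · rw [Subgraph.isPerfectMatching_iff]
    intro v
    by_cases hvS : v ∈ S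
    · obtain ⟨w, hw, hu⟩ := degree_one_nbr (hdegS v hvS)
      refine ⟨w, ⟨hw, Or.inl hvS⟩, ?_⟩
      intro b hb
      exact hu b hb.1
    · have hvmem : v ∈ S.biUnion N := hcover ▸ Finset.mem_univ v
      obtain ⟨u, huS, hvN⟩ := Finset.mem_biUnion.1 hvmem
      rw [hmemN] at hvN
      rcases hvN with rfl | hvN
      · exact absurd huS hvS
      refine ⟨u, ⟨hvN.symm, Or.inr huS⟩, ?_⟩
      intro b hb
      rcases hb.2 with hbS | hbS
      · exact absurd hbS hvS
      · by_contra hbu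
        exact hS hbS huS ⟨hbu, Or.inr ⟨v, hb.1.symm, hvN.symm⟩⟩
  · intro a b hab
    rcases hab.2 with h | h
    · exact Or.inl (hdegS a h)
    · exact Or.inr (hdegS b h)

end Chunk7

def Struct [Fintype V] (G : SimpleGraph V) : Prop :=
  ∀ v : V, G.degree v = 1 ∨ ∃! l, G.Adj v l ∧ G.degree l = 1

namespace Chunk8
variable [Fintype V] {G : SimpleGraph V}
open Aux Chunk2 Chunk3 Chunk4 Chunk5 Chunk6 Chunk7

lemma struct_ppm (hs : Struct G) : HasPendantPerfectMatching G := by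
  refine ⟨⟨Set.univ, fun a b => G.Adj a b ∧ (G.degree a = 1 ∨ G.degree b = 1), fun h => h.1,
    fun {v w} _ => Set.mem_univ v, ⟨fun a b h => ⟨h.1.symm, h.2.symm⟩⟩⟩, ?_, fun a b h => h.2⟩
  rw [Subgraph.isPerfectMatching_iff]
  intro v
  by_cases hdv : G.degree v = 1
  · obtain ⟨w, hw, hu⟩ := degree_one_nbr hdv
    exact ⟨w, ⟨hw, Or.inl hdv⟩, fun b hb => hu b hb.1⟩
  · rcases hs v with hdeg | ⟨l, ⟨hl1, hl2⟩, hlu⟩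
    · exact absurd hdeg hdv
    · refine ⟨l, ⟨hl1, Or.inr hl2⟩, ?_⟩
      intro b hb
      rcases hb.2 with h | h
      · exact absurd h hdv
      · exact hlu b ⟨hb.1, h⟩

lemma induce_adj_iff {s : Set V} {a b : ↥s} : (G.induce s).Adj a b ↔ G.Adj ↑a ↑b := Iff.rfl

lemma reachable_induce {s : Set V} {u w : V} (p : G.Walk u w) :
    (∀ y ∈ p.support, y ∈ s) → ∀ (hu : u ∈ s) (hw : w ∈ s),
      (G.induce s).Reachable ⟨u, hu⟩ ⟨w, hw⟩ := by
  induction p with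
  | nil => intro _ hu hw; exact Reachable.refl _
  | @cons a b c h q ih =>
    intro hsup hu hw
    have hb : b ∈ s := hsup b (by rw [Walk.support_cons]; exact List.mem_cons_of_mem _ q.start_mem_support)
    have hadj : (G.induce s).Adj ⟨a, hu⟩ ⟨b, hb⟩ := h
    exact hadj.reachable.trans
      (ih (fun y hy => hsup y (by rw [Walk.support_cons]; exact List.mem_cons_of_mem _ hy)) hb hw)

lemma induce_acyclic (hac : G.IsAcyclic) (s : Set V) : (G.induce s).IsAcyclic := by
  intro v c hc
  exact hac (c.map (SimpleGraph.Embedding.induce s).toHom)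
    (hc.map (Subtype.val_injective))

lemma induce_degree {s : Set V} (v : ↥s)
    [Fintype ((G.induce s).neighborSet v)] [Fintype (G.neighborSet (v : V))]
    [DecidablePred (· ∈ s)] :
    (G.induce s).degree v = ((G.neighborFinset ↑v).filter (fun w => w ∈ s)).card := by
  rw [← SimpleGraph.card_neighborFinset_eq_degree]
  refine Finset.card_bij' (fun (a : ↥s) (_ : a ∈ (G.induce s).neighborFinset v) => (a : V))
    (fun w hw => ⟨w, (Finset.mem_filter.1 hw).2⟩) ?_ ?_ ?_ ?_
  · intro a ha
    rw [mem_neighborFinset] at ha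
    rw [Finset.mem_filter, mem_neighborFinset]
    exact ⟨ha, a.2⟩
  · intro w hw
    rw [mem_neighborFinset]
    exact ((Finset.mem_filter.1 hw).1 |> (G.mem_neighborFinset _ _).1 : G.Adj _ _)
  · intro a _
    exact Subtype.ext rfl
  · intro w _
    rfl

/-- map a Finset of the subtype back to `V` -/
noncomputable def down {s : Set V} (S' : Finset ↥s) : Finset V :=
  S'.map ⟨Subtype.val, Subtype.val_injective⟩

lemma mem_down {s : Set V} {S' : Finset ↥s} {v : V} :
    v ∈ down S' ↔ ∃ h : v ∈ s, (⟨v, h⟩ : ↥s) ∈ S' := by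
  constructor
  · intro hv
    obtain ⟨a, ha, rfl⟩ := Finset.mem_map.1 hv
    exact ⟨a.2, by simpa using ha⟩
  · rintro ⟨h, hv⟩
    exact Finset.mem_map.2 ⟨⟨v, h⟩, hv, rfl⟩

lemma down_card {s : Set V} (S' : Finset ↥s) : (down S').card = S'.card := Finset.card_map _

lemma down_subset {s : Set V} {W : Finset V} (hW : ∀ x : V, x ∈ s ↔ x ∈ W) (S' : Finset ↥s) :
    down S' ⊆ W := by
  intro v hv
  obtain ⟨h, _⟩ := mem_down.1 hv
  exact (hW v).1 h

lemma down_stable {s : Set V} {S' : Finset ↥s} (hst : IsStable (G.induce s) S') :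
    IsStable G (down S') := by
  intro a ha b hb hadj
  obtain ⟨has, haS⟩ := mem_down.1 ha
  obtain ⟨hbs, hbS⟩ := mem_down.1 hb
  exact hst haS hbS hadj

lemma maxIn_down {W : Finset V} {S' : Finset ↥(↑W : Set V)}
    (h : MaxIn (G.induce (↑W : Set V)) Finset.univ S') : MaxIn G W (down S') := by
  refine ⟨down_subset (fun x => Finset.mem_coe) S', down_stable h.2.1, ?_⟩
  intro v hv hvS
  have hvs : v ∈ (↑W : Set V) := hv
  have : (⟨v, hvs⟩ : ↥(↑W : Set V)) ∉ S' := fun hmem => hvS (mem_down.2 ⟨hvs, hmem⟩)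
  obtain ⟨u, huS, hadj⟩ := h.2.2 ⟨v, hvs⟩ (Finset.mem_univ _) this
  exact ⟨↑u, mem_down.2 ⟨u.2, by simpa using huS⟩, hadj⟩

end Chunk8

namespace Chunk9
open Aux Chunk2 Chunk3 Chunk4 Chunk5 Chunk6 Chunk7 Chunk8

universe u

set_option maxHeartbeats 2000000 in
lemma wc_struct : ∀ (n : ℕ) (V : Type u) [Fintype V] (G : SimpleGraph V),
    Fintype.card V = n → G.IsTree → 2 ≤ Fintype.card V → WellCovered G → Struct G := by
  intro n
  induction n using Nat.strong_induction_on with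
  | _ n ih =>
  intro V _ G hcard ht h2 hwc
  have hc := ht.isConnected
  have hclaim1 := claim1 hwc
  rcases eq_or_lt_of_le h2 with hn2 | hn3
  · -- n = 2
    intro v
    left
    obtain ⟨w, hw⟩ := exists_adj hc h2 v
    refine degree_one_of_unique_nbr hw (fun u hu => ?_)
    by_contra hne
    have h3 : ({v, u, w} : Finset V).card = 3 :=
      Finset.card_eq_three.2 ⟨v, u, w, hu.ne, hw.ne, hne, rfl⟩
    have hle := Finset.card_le_card (Finset.subset_univ ({v, u, w} : Finset V))
    rw [Finset.card_univ, h3] at hle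
    omega
  · -- n ≥ 3
    have h3 : 3 ≤ Fintype.card V := hn3
    obtain ⟨l, a, x, hld, hal, hax, hxl, haN⟩ := exists_good_pendant ht h3 hclaim1
    obtain ⟨la, hla, hlu⟩ := degree_one_nbr hld
    have hlnbr : ∀ u, G.Adj l u → u = a := by
      intro u hu
      rw [hlu u hu, ← hlu a hal.symm]
    have hdeg_a2 : 2 ≤ G.degree a := by
      rw [← G.card_neighborFinset_eq_degree]
      exact Finset.one_lt_card.2 ⟨l, (G.mem_neighborFinset a l).2 hal, x,
        (G.mem_neighborFinset a x).2 hax, (Ne.symm hxl)⟩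
    rcases eq_or_lt_of_le h3 with hn3eq | hn4
    · -- n = 3 : contradiction
      exfalso
      have huniv : (Finset.univ : Finset V) = {l, a, x} := by
        apply (Finset.eq_of_subset_of_card_le (Finset.subset_univ _) _).symm
        rw [Finset.card_univ, ← hn3eq]
        have : ({l, a, x} : Finset V).card = 3 :=
          Finset.card_eq_three.2 ⟨l, a, x, hal.ne', Ne.symm hxl, hax.ne, rfl⟩
        omega
      have hdegx : G.degree x = 1 := by
        refine degree_one_of_unique_nbr hax.symm (fun u hu => ?_)
        have humem : u ∈ ({l, a, x} : Finset V) := huniv ▸ Finset.mem_univ u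
        simp only [Finset.mem_insert, Finset.mem_singleton] at humem
        rcases humem with rfl | rfl | rfl
        · exact absurd (hlnbr x hu.symm) hax.ne'
        · rfl
        · exact absurd rfl hu.ne'
      exact (Ne.symm hxl) (hclaim1 a l x hal hax hld hdegx)
    · -- n ≥ 4
      have h4 : 4 ≤ Fintype.card V := hn4
      obtain ⟨W, hW⟩ : ∃ W : Finset V, W = (Finset.univ.erase l).erase a := ⟨_, rfl⟩
      have hmemW : ∀ v, v ∈ W ↔ (v ≠ a ∧ v ≠ l) := by
        intro v
        simp [hW, Finset.mem_erase]
      have hWcard : W.card = Fintype.card V - 2 := by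
        rw [hW, Finset.card_erase_of_mem (Finset.mem_erase.2 ⟨hal.ne, Finset.mem_univ a⟩),
          Finset.card_erase_of_mem (Finset.mem_univ l), Finset.card_univ]
        omega
      have hxW : x ∈ W := (hmemW x).2 ⟨hax.ne', fun h => hxl h⟩
      have hlW : l ∉ W := fun h => ((hmemW l).1 h).2 rfl
      have haW : a ∉ W := fun h => ((hmemW a).1 h).1 rfl
      -- every maximal-in-W stable set has card (alpha G) - 1
      have h1 : ∀ S : Finset V, MaxIn G W S → S.card + 1 = alpha G := by
        intro S hS
        have hlS : l ∉ S := fun h => hlW (hS.1 h)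
        have hstab : IsStable G (insert l S) := by
          apply stable_insert hS.2.1
          intro u huS hadj
          exact haW ((hlnbr u hadj) ▸ hS.1 huS)
        have hmax : MaxIn G Finset.univ (insert l S) := by
          refine ⟨Finset.subset_univ _, hstab, ?_⟩
          intro v _ hv
          have hvl : v ≠ l := fun h => hv (h ▸ Finset.mem_insert_self l S)
          rcases eq_or_ne v a with rfl | hva
          · exact ⟨l, Finset.mem_insert_self l S, hal⟩
          · have hvW : v ∈ W := (hmemW v).2 ⟨hva, hvl⟩
            have hvS : v ∉ S := fun h => hv (Finset.mem_insert_of_mem h)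
            obtain ⟨u, huS, hadj⟩ := hS.2.2 v hvW hvS
            exact ⟨u, Finset.mem_insert_of_mem huS, hadj⟩
        have := wc_card_of_maxIn hwc.2 hmax
        rw [Finset.card_insert_of_notMem hlS] at this
        omega
      letI instW : Fintype ↥(↑W : Set V) := FinsetCoe.fintype W
      have hcardW' : Fintype.card ↥(↑W : Set V) = W.card :=
        (Fintype.card_congr (Equiv.subtypeEquivRight
          (fun z : V => (Finset.mem_coe : z ∈ ↑W ↔ z ∈ W)))).trans (Fintype.card_coe W)
      have hsupp : ∀ (uu ww : V), uu ∈ W → ww ∈ W → ∀ (p : G.Walk uu ww), p.IsPath →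
          ∀ y ∈ p.support, y ∈ (↑W : Set V) := by
        intro uu ww huu hww p hp
        have hl : l ∉ p.support := by
          intro hl
          obtain ⟨b, c', hne, hb, hc, _, _⟩ := internal_two_nbrs p hp l hl
            (fun h => hlW (h ▸ huu)) (fun h => hlW (h ▸ hww))
          exact hne ((hlnbr b hb).trans (hlnbr c' hc).symm)
        have ha : a ∉ p.support := by
          intro ha
          obtain ⟨b, c', hne, hb, hc, hbs, hcs⟩ := internal_two_nbrs p hp a ha
            (fun h => haW (h ▸ huu)) (fun h => haW (h ▸ hww))
          rcases haN b hb with rfl | rfl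
          · exact hl hbs
          · rcases haN c' hc with rfl | rfl
            · exact hl hcs
            · exact hne rfl
        intro y hy
        have hyl : y ≠ l := fun h => hl (h ▸ hy)
        have hya : y ≠ a := fun h => ha (h ▸ hy)
        exact Finset.mem_coe.2 ((hmemW y).2 ⟨hya, hyl⟩)
      have hWconn : (G.induce (↑W : Set V)).Connected := by
        rw [connected_iff]
        constructor
        · rintro ⟨uu, huu⟩ ⟨ww, hww⟩
          obtain ⟨p0⟩ := hc.preconnected uu ww
          exact reachable_induce p0.toPath.1
            (hsupp uu ww (Finset.mem_coe.1 huu) (Finset.mem_coe.1 hww) _ p0.toPath.2) _ _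
        · rw [← Fintype.card_pos_iff, hcardW', hWcard]
          omega
      have htW : (G.induce (↑W : Set V)).IsTree := ⟨hWconn, induce_acyclic ht.IsAcyclic _⟩
      have hW2 : 2 ≤ Fintype.card ↥(↑W : Set V) := by
        rw [hcardW', hWcard]; omega
      have hwcW : WellCovered (G.induce (↑W : Set V)) := by
        constructor
        · exact fun v => exists_adj hWconn hW2 v
        · intro S' hst hmaxsub
          have hmax := maxIn_down (G := G) (subset_maximal_maxIn_univ hst hmaxsub)
          have hc1 := h1 _ hmax
          rw [down_card] at hc1
          obtain ⟨S0, hS0max, hS0card⟩ := alpha_set_maxIn (G.induce (↑W : Set V))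
          have hc0 := h1 _ (maxIn_down (G := G) hS0max)
          rw [down_card] at hc0
          omega
      have hstructW : Struct (G.induce (↑W : Set V)) :=
        ih (Fintype.card V - 2) (by omega) ↥(↑W : Set V) (G.induce (↑W : Set V))
          (by rw [hcardW', hWcard]) htW hW2 hwcW
      -- relative degrees
      obtain ⟨rd, hrd⟩ : ∃ rd : V → ℕ, rd = fun v =>
          ((G.neighborFinset v).filter (fun w => w ∈ (↑W : Set V))).card := ⟨_, rfl⟩
      have hrd_induce : ∀ (v : V) (hv : v ∈ (↑W : Set V)),
          (G.induce (↑W : Set V)).degree ⟨v, hv⟩ = rd v := by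
        intro v hv
        rw [hrd]
        exact induce_degree _
      have hrd_eq : ∀ v ∈ W, v ≠ x → rd v = G.degree v := by
        intro v hvW hvx
        simp only [hrd]
        have hfil : (G.neighborFinset v).filter (fun w => w ∈ (↑W : Set V)) =
            G.neighborFinset v := by
          apply Finset.filter_true_of_mem
          intro w hw
          rw [mem_neighborFinset] at hw
          have hwl : w ≠ l := by
            rintro rfl
            exact ((hmemW v).1 hvW).1 (hlnbr v hw.symm)
          have hwa : w ≠ a := by
            rintro rfl
            rcases haN v hw.symm with rfl | rfl
            · exact ((hmemW v).1 hvW).2 rfl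
            · exact hvx rfl
          exact Finset.mem_coe.2 ((hmemW w).2 ⟨hwa, hwl⟩)
        rw [hfil, G.card_neighborFinset_eq_degree]
      have hrd_x : rd x + 1 = G.degree x := by
        simp only [hrd]
        have hfil : (G.neighborFinset x).filter (fun w => w ∈ (↑W : Set V)) =
            (G.neighborFinset x).erase a := by
          ext w
          rw [Finset.mem_filter, Finset.mem_erase, mem_neighborFinset]
          constructor
          · rintro ⟨hadj, hmem⟩
            exact ⟨((hmemW w).1 (Finset.mem_coe.1 hmem)).1, hadj⟩
          · rintro ⟨hwa, hadj⟩
            have hwl : w ≠ l := by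
              rintro rfl
              exact hax.ne' (hlnbr x hadj.symm)
            exact ⟨hadj, Finset.mem_coe.2 ((hmemW w).2 ⟨hwa, hwl⟩)⟩
        rw [hfil, Finset.card_erase_of_mem ((G.mem_neighborFinset x a).2 hax.symm),
          G.card_neighborFinset_eq_degree]
        have : 1 ≤ G.degree x := by
          rw [← G.card_neighborFinset_eq_degree]
          exact Finset.card_pos.2 ⟨a, (G.mem_neighborFinset x a).2 hax.symm⟩
        omega
      have hxWs : x ∈ (↑W : Set V) := Finset.mem_coe.2 hxW
      have xnbrs_pre : ∀ u, G.Adj x u → u ≠ a → u ∈ W := by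
        intro u hu hua
        have hul : u ≠ l := by
          rintro rfl
          exact hax.ne' (hlnbr x hu.symm)
        exact (hmemW u).2 ⟨hua, hul⟩
      by_cases hrdx1 : rd x = 1
      · -- CASE X : x has a unique neighbour inside W
        have hfil1 : ((G.neighborFinset x).filter (fun w => w ∈ (↑W : Set V))).card = 1 := by
          rw [← hrdx1, hrd]
        obtain ⟨y, hy⟩ := Finset.card_eq_one.1 hfil1
        have hymem := hy ▸ Finset.mem_singleton_self y
        rw [Finset.mem_filter, mem_neighborFinset] at hymem
        have hxy : G.Adj x y := hymem.1
        have hyW : y ∈ W := Finset.mem_coe.1 hymem.2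
        have hyWs : y ∈ (↑W : Set V) := hymem.2
        have huniqW : ∀ u, G.Adj x u → u ∈ W → u = y := by
          intro u h1 h2
          have : u ∈ (G.neighborFinset x).filter (fun w => w ∈ (↑W : Set V)) :=
            Finset.mem_filter.2 ⟨(G.mem_neighborFinset x u).2 h1, Finset.mem_coe.2 h2⟩
          rw [hy] at this
          exact Finset.mem_singleton.1 this
        have xnbrs : ∀ u, G.Adj x u → u = a ∨ u = y := by
          intro u hu
          rcases eq_or_ne u a with rfl | hua
          · exact Or.inl rfl
          · exact Or.inr (huniqW u hu (xnbrs_pre u hu hua))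
        have hdegx2 : G.degree x = 2 := by omega
        by_cases hrdy1 : rd y = 1
        · -- K2 subcase : n = 4
          have hdxI : (G.induce (↑W : Set V)).degree ⟨x, hxWs⟩ = 1 :=
            (hrd_induce x hxWs).trans hrdx1
          have hdyI : (G.induce (↑W : Set V)).degree ⟨y, hyWs⟩ = 1 :=
            (hrd_induce y hyWs).trans hrdy1
          have hadjI : (G.induce (↑W : Set V)).Adj ⟨x, hxWs⟩ ⟨y, hyWs⟩ := hxy
          have hW2card : W.card = 2 := by
            by_contra hne2
            have hge3 : 3 ≤ Fintype.card ↥(↑W : Set V) := by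
              rw [hcardW']
              omega
            exact no_K2 hWconn hge3 hadjI hdxI hdyI
          have hWxy : W = {x, y} := by
            apply (Finset.eq_of_subset_of_card_le _ _).symm
            · intro u hu
              rcases Finset.mem_insert.1 hu with rfl | hu'
              · exact hxW
              · exact (Finset.mem_singleton.1 hu') ▸ hyW
            · rw [hW2card]
              rw [Finset.card_insert_of_notMem (by simp [hxy.ne]), Finset.card_singleton]
          -- y's neighbours in G : only x
          have hyG : ∀ u, G.Adj y u → u = x := by
            intro u hu
            have hul : u ≠ l := by
              rintro rfl
              exact ((hmemW y).1 hyW).1 (hlnbr y hu.symm)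
            have hua : u ≠ a := by
              rintro rfl
              rcases haN y hu.symm with rfl | rfl
              · exact ((hmemW y).1 hyW).2 rfl
              · exact hxy.ne rfl
            have huW : u ∈ W := (hmemW u).2 ⟨hua, hul⟩
            rw [hWxy] at huW
            rcases Finset.mem_insert.1 huW with rfl | huW'
            · rfl
            · exact absurd (Finset.mem_singleton.1 huW') hu.ne'
          have hdy_G : G.degree y = 1 := degree_one_of_unique_nbr hxy.symm hyG
          -- Struct G directly
          intro v
          have hv4 : v = l ∨ v = a ∨ v = x ∨ v = y := by
            rcases eq_or_ne v l with rfl | hvl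
            · exact Or.inl rfl
            rcases eq_or_ne v a with rfl | hva
            · exact Or.inr (Or.inl rfl)
            have : v ∈ W := (hmemW v).2 ⟨hva, hvl⟩
            rw [hWxy] at this
            rcases Finset.mem_insert.1 this with rfl | h'
            · exact Or.inr (Or.inr (Or.inl rfl))
            · exact Or.inr (Or.inr (Or.inr (Finset.mem_singleton.1 h')))
          rcases hv4 with rfl | rfl | rfl | rfl
          · exact Or.inl hld
          · refine Or.inr ⟨l, ⟨hal, hld⟩, ?_⟩
            rintro u ⟨hu, hud⟩
            rcases haN u hu with rfl | rfl
            · rfl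
            · rw [hdegx2] at hud
              omega
          · refine Or.inr ⟨y, ⟨hxy, hdy_G⟩, ?_⟩
            rintro u ⟨hu, hud⟩
            rcases xnbrs u hu with rfl | rfl
            · exact absurd hud (by omega)
            · rfl
          · exact Or.inl hdy_G
        · -- y has a second neighbour in W : contradiction
          exfalso
          have hxfil : x ∈ (G.neighborFinset y).filter (fun w => w ∈ (↑W : Set V)) :=
            Finset.mem_filter.2 ⟨(G.mem_neighborFinset y x).2 hxy.symm, hxWs⟩
          have h1y : 1 ≤ rd y := by
            rw [hrd]
            exact Finset.card_pos.2 ⟨x, hxfil⟩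
          have h2y : 1 < rd y := by
            rcases Nat.lt_or_ge 1 (rd y) with h | h
            · exact h
            · exact absurd (by omega : rd y = 1) hrdy1
          rw [hrd] at h2y
          obtain ⟨b, hb, c', hc', hbc⟩ := Finset.one_lt_card.1 h2y
          have hget : ∃ z, z ∈ (G.neighborFinset y).filter (fun w => w ∈ (↑W : Set V)) ∧
              z ≠ x := by
            rcases eq_or_ne b x with rfl | hbx
            · exact ⟨c', hc', fun h => hbc h.symm⟩
            · exact ⟨b, hb, hbx⟩
          obtain ⟨z, hzfil, hzx⟩ := hget
          rw [Finset.mem_filter, mem_neighborFinset] at hzfil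
          have hyz : G.Adj y z := hzfil.1
          have hzW : z ∈ W := Finset.mem_coe.1 hzfil.2
          have hzW'' : z ∈ W.erase x := Finset.mem_erase.2 ⟨hzx, hzW⟩
          obtain ⟨D, hzDsub, hD⟩ := extend_maxIn (W := W.erase x)
            (Finset.singleton_subset_iff.2 hzW'') (stable_singleton G z)
          have hzD : z ∈ D := hzDsub (Finset.mem_singleton_self z)
          have hyD : y ∉ D := fun h => hD.2.1 h hzD hyz
          have hxD : x ∉ D := fun h => (Finset.mem_erase.1 (hD.1 h)).1 rfl
          have hDW : D ⊆ W := hD.1.trans (Finset.erase_subset _ _)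
          have haD : a ∉ D := fun h => haW (hDW h)
          have hA : MaxIn G W (insert x D) := by
            refine ⟨Finset.insert_subset hxW hDW, stable_insert hD.2.1 ?_, ?_⟩
            · intro u huD hadj
              rcases xnbrs u hadj with rfl | rfl
              · exact haW (hDW huD)
              · exact hyD huD
            · intro v hvW hvIns
              have hvx : v ≠ x := fun h => hvIns (h ▸ Finset.mem_insert_self x D)
              have hvW'' : v ∈ W.erase x := Finset.mem_erase.2 ⟨hvx, hvW⟩
              have hvD : v ∉ D := fun h => hvIns (Finset.mem_insert_of_mem h)
              obtain ⟨u, huD, hadj⟩ := hD.2.2 v hvW'' hvD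
              exact ⟨u, Finset.mem_insert_of_mem huD, hadj⟩
          have hcA := h1 _ hA
          rw [Finset.card_insert_of_notMem hxD] at hcA
          have hB : MaxIn G Finset.univ (insert a D) := by
            refine ⟨Finset.subset_univ _, stable_insert hD.2.1 ?_, ?_⟩
            · intro u huD hadj
              rcases haN u hadj with rfl | rfl
              · exact hlW (hDW huD)
              · exact hxD huD
            · intro v _ hvIns
              have hva : v ≠ a := fun h => hvIns (h ▸ Finset.mem_insert_self a D)
              have hvD : v ∉ D := fun h => hvIns (Finset.mem_insert_of_mem h)
              rcases eq_or_ne v l with rfl | hvl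
              · exact ⟨a, Finset.mem_insert_self a D, hal.symm⟩
              rcases eq_or_ne v x with rfl | hvx
              · exact ⟨a, Finset.mem_insert_self a D, hax.symm⟩
              · have hvW'' : v ∈ W.erase x := Finset.mem_erase.2 ⟨hvx, (hmemW v).2 ⟨hva, hvl⟩⟩
                obtain ⟨u, huD, hadj⟩ := hD.2.2 v hvW'' hvD
                exact ⟨u, Finset.mem_insert_of_mem huD, hadj⟩
          have hcB := wc_card_of_maxIn hwc.2 hB
          rw [Finset.card_insert_of_notMem haD] at hcB
          omega
      · -- CASE Y : x is not a leaf of the induced tree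
        have hrdx_ge1 : 1 ≤ rd x := by
          obtain ⟨w', hw'⟩ := exists_adj hWconn hW2 ⟨x, hxWs⟩
          have hadj' : G.Adj x ↑w' := hw'
          have : (w' : V) ∈ (G.neighborFinset x).filter (fun w => w ∈ (↑W : Set V)) :=
            Finset.mem_filter.2 ⟨(G.mem_neighborFinset x _).2 hadj', w'.2⟩
          rw [hrd]
          exact Finset.card_pos.2 ⟨_, this⟩
        have hdegx3 : 3 ≤ G.degree x := by omega
        rcases hstructW ⟨x, hxWs⟩ with hl1 | ⟨l', ⟨hl'adj, hl'deg⟩, hl'uniq⟩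
        · exact absurd ((hrd_induce x hxWs).symm.trans hl1) hrdx1
        have hwW : (l' : V) ∈ W := Finset.mem_coe.1 l'.2
        have hxw : G.Adj x ↑l' := hl'adj
        have hwx : (l' : V) ≠ x := hxw.ne'
        have hwrd : rd ↑l' = 1 := (hrd_induce ↑l' l'.2).symm.trans hl'deg
        have hwdeg : G.degree ↑l' = 1 := by
          rw [← hrd_eq ↑l' hwW hwx]
          exact hwrd
        have huniq_x : ∀ u, G.Adj x u → G.degree u = 1 → u = ↑l' := by
          intro u hu hud
          have hune_a : u ≠ a := by
            rintro rfl
            omega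
          have huW : u ∈ W := xnbrs_pre u hu hune_a
          have hux : u ≠ x := by
            rintro rfl
            omega
          have hurd : rd u = 1 := by
            rw [hrd_eq u huW hux]
            exact hud
          have := hl'uniq ⟨u, Finset.mem_coe.2 huW⟩
            ⟨hu, (hrd_induce u (Finset.mem_coe.2 huW)).trans hurd⟩
          exact congrArg Subtype.val this
        intro v
        rcases eq_or_ne v l with rfl | hvl
        · exact Or.inl hld
        rcases eq_or_ne v a with rfl | hva
        · refine Or.inr ⟨l, ⟨hal, hld⟩, ?_⟩
          rintro u ⟨hu, hud⟩
          rcases haN u hu with rfl | rfl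
          · rfl
          · omega
        rcases eq_or_ne v x with rfl | hvx
        · exact Or.inr ⟨↑l', ⟨hxw, hwdeg⟩, fun u hu => huniq_x u hu.1 hu.2⟩
        · have hvW : v ∈ W := (hmemW v).2 ⟨hva, hvl⟩
          have hvWs : v ∈ (↑W : Set V) := Finset.mem_coe.2 hvW
          rcases hstructW ⟨v, hvWs⟩ with h1' | ⟨w', ⟨hw'adj, hw'deg⟩, hw'uniq⟩
          · left
            rw [← hrd_eq v hvW hvx]
            exact (hrd_induce v hvWs).symm.trans h1'
          · right
            have hw2W : (w' : V) ∈ W := Finset.mem_coe.1 w'.2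
            have hvw2 : G.Adj v ↑w' := hw'adj
            have hw2rd : rd ↑w' = 1 := (hrd_induce ↑w' w'.2).symm.trans hw'deg
            have hw2x : (w' : V) ≠ x := fun h => hrdx1 (h ▸ hw2rd)
            have hw2deg : G.degree ↑w' = 1 := by
              rw [← hrd_eq ↑w' hw2W hw2x]
              exact hw2rd
            refine ⟨↑w', ⟨hvw2, hw2deg⟩, ?_⟩
            rintro u ⟨hu, hud⟩
            have hune_l : u ≠ l := by
              rintro rfl
              exact ((hmemW v).1 hvW).1 (hlnbr v hu.symm)
            have hune_a : u ≠ a := by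
              rintro rfl
              omega
            have huW : u ∈ W := (hmemW u).2 ⟨hune_a, hune_l⟩
            have hux : u ≠ x := by
              rintro rfl
              omega
            have hurd : rd u = 1 := by
              rw [hrd_eq u huW hux]
              exact hud
            have := hw'uniq ⟨u, Finset.mem_coe.2 huW⟩
              ⟨hu, (hrd_induce u (Finset.mem_coe.2 huW)).trans hurd⟩
            exact congrArg Subtype.val this

end Chunk9


/-- For a tree of order ≥ 2: well-covered ⟺ very well-covered ⟺ perfect matching of
pendant edges ⟺ square-stable. -/
theorem stmt18 [Fintype V] (G : SimpleGraph V) (ht : G.IsTree)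
    (hn : 2 ≤ Fintype.card V) :
    (WellCovered G ↔ VeryWellCovered G) ∧
    (WellCovered G ↔ HasPendantPerfectMatching G) ∧
    (WellCovered G ↔ SquareStable G) := by
  have hWCPPM : WellCovered G ↔ HasPendantPerfectMatching G :=
    ⟨fun hwc => Chunk8.struct_ppm (Chunk9.wc_struct (Fintype.card V) V G rfl ht hn hwc),
      Chunk5.ppm_wc⟩
  refine ⟨⟨fun hwc => Chunk5.ppm_vwc (hWCPPM.1 hwc), fun hv => hv.1⟩, hWCPPM, ?_⟩
  exact ⟨fun hwc => Chunk6.ppm_sqs ht.isConnected hn (hWCPPM.1 hwc),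
    fun hsq => Chunk5.ppm_wc (Chunk7.sqs_ppm ht hn hsq)⟩
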